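/- Two consecutive Hankel determinants have no common positive real zero: there is no n ≥ 1 and no ω* > 0 such that h_{n−1}(ω*) = 0 and h_n(ω*) = 0. -/

import Mathlib

open MeasureTheory

/-- Moments of the oscillatory weight `e^{iωx}` on `[-1,1]`. -/
noncomputable def mu (ω : ℝ) (n : ℕ) : ℂ :=
  ∫ x : ℝ in (-1 : ℝ)..1, (x : ℂ) ^ n * Complex.exp (Complex.I * ω * x)

/-- The `(n+1) × (n+1)` Hankel determinant of the moments. -/
noncomputable def hankel (n : ℕ) (ω : ℝ) : ℂ :=
  Matrix.det (Matrix.of fun j k : Fin (n + 1) => mu ω ((j : ℕ) + (k : ℕ)))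

namespace Stmt17Aux

open Polynomial Complex intervalIntegral

/-- The moment functional `L f = ∫_{-1}^1 f(x) e^{iωx} dx` on complex polynomials. -/
noncomputable def LL (ω : ℝ) (f : ℂ[X]) : ℂ :=
  ∫ x : ℝ in (-1 : ℝ)..1, Polynomial.eval (x : ℂ) f * Complex.exp (Complex.I * ω * x)

variable (ω : ℝ)

lemma cont_integrand (f : ℂ[X]) :
    Continuous fun x : ℝ => Polynomial.eval (x : ℂ) f * Complex.exp (Complex.I * ω * x) :=
  (f.continuous.comp Complex.continuous_ofReal).mul
    (Complex.continuous_exp.comp (by continuity))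

lemma integrable_integrand (f : ℂ[X]) :
    IntervalIntegrable (fun x : ℝ => Polynomial.eval (x : ℂ) f * Complex.exp (Complex.I * ω * x))
      volume (-1) 1 := (cont_integrand ω f).intervalIntegrable _ _

lemma LL_add (f g : ℂ[X]) : LL ω (f + g) = LL ω f + LL ω g := by
  unfold LL
  rw [← intervalIntegral.integral_add (integrable_integrand ω f) (integrable_integrand ω g)]
  congr 1; funext x; simp [add_mul]

lemma LL_sub (f g : ℂ[X]) : LL ω (f - g) = LL ω f - LL ω g := by
  unfold LL
  rw [← intervalIntegral.integral_sub (integrable_integrand ω f) (integrable_integrand ω g)]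
  congr 1; funext x; simp [sub_mul]

lemma LL_C_mul (a : ℂ) (f : ℂ[X]) : LL ω (C a * f) = a * LL ω f := by
  unfold LL
  rw [← intervalIntegral.integral_const_mul]
  congr 1; funext x; simp [mul_assoc]

lemma LL_sum {ι : Type*} (s : Finset ι) (F : ι → ℂ[X]) :
    LL ω (∑ i ∈ s, F i) = ∑ i ∈ s, LL ω (F i) := by
  unfold LL
  rw [← intervalIntegral.integral_finset_sum (fun i _ => integrable_integrand ω (F i))]
  congr 1; funext x
  rw [eval_finset_sum, Finset.sum_mul]

lemma LL_X_pow (s : ℕ) : LL ω (X ^ s) = mu ω s := by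
  unfold LL mu
  congr 1; funext x; simp

/-- The string equation (integration by parts). -/
lemma LL_derivative (f : ℂ[X]) :
    LL ω (derivative f) = Polynomial.eval 1 f * Complex.exp (Complex.I * ω)
      - Polynomial.eval (-1) f * Complex.exp (-(Complex.I * ω)) - Complex.I * ω * LL ω f := by
  have key : (∫ x : ℝ in (-1 : ℝ)..1,
        (Polynomial.eval (x : ℂ) (derivative f) * Complex.exp (Complex.I * ω * x)
          + Complex.I * ω * (Polynomial.eval (x : ℂ) f * Complex.exp (Complex.I * ω * x))))
      = Polynomial.eval ((1 : ℝ) : ℂ) f * Complex.exp (Complex.I * ω * ((1 : ℝ) : ℂ))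
        - Polynomial.eval ((-1 : ℝ) : ℂ) f * Complex.exp (Complex.I * ω * ((-1 : ℝ) : ℂ)) := by
    apply intervalIntegral.integral_eq_sub_of_hasDerivAt
      (f := fun x : ℝ => Polynomial.eval (x : ℂ) f * Complex.exp (Complex.I * ω * x))
    · intro x _
      have h1 : HasDerivAt (fun z : ℂ => Polynomial.eval z f * Complex.exp (Complex.I * ω * z))
          (Polynomial.eval (x : ℂ) (derivative f) * Complex.exp (Complex.I * ω * x)
            + Polynomial.eval (x : ℂ) f * (Complex.exp (Complex.I * ω * x) * (Complex.I * ω)))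
          (x : ℂ) := by
        have hlin : HasDerivAt (fun z : ℂ => Complex.I * ω * z) (Complex.I * ω) ((x : ℝ) : ℂ) := by
          simpa using (hasDerivAt_id ((x : ℝ) : ℂ)).const_mul (Complex.I * ω)
        exact (f.hasDerivAt (x : ℂ)).mul hlin.cexp
      have h2 := h1.comp_ofReal
      convert h2 using 1
      · rfl
      ring
    · apply Continuous.intervalIntegrable
      apply Continuous.add (cont_integrand ω (derivative f))
      exact continuous_const.mul (cont_integrand ω f)
  have split : (∫ x : ℝ in (-1 : ℝ)..1,
        (Polynomial.eval (x : ℂ) (derivative f) * Complex.exp (Complex.I * ω * x)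
          + Complex.I * ω * (Polynomial.eval (x : ℂ) f * Complex.exp (Complex.I * ω * x))))
      = LL ω (derivative f) + Complex.I * ω * LL ω f := by
    unfold LL
    rw [intervalIntegral.integral_add (integrable_integrand ω (derivative f))
      (by exact (continuous_const.mul (cont_integrand ω f)).intervalIntegrable _ _),
      intervalIntegral.integral_const_mul]
  rw [split] at key
  have e1 : Complex.I * ω * ((1 : ℝ) : ℂ) = Complex.I * ω := by push_cast; ring
  have e2 : Complex.I * ω * ((-1 : ℝ) : ℂ) = -(Complex.I * ω) := by push_cast; ring
  rw [e1, e2] at key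
  push_cast at key ⊢
  linear_combination key

/-- Orthogonality: `f` is orthogonal to all powers `x^j`, `j ≤ m`. -/
def Orth (ω : ℝ) (f : ℂ[X]) (m : ℕ) : Prop := ∀ j ≤ m, LL ω (X ^ j * f) = 0

lemma LL_mul_eq_zero {f : ℂ[X]} {m : ℕ} (h : Orth ω f m) {g : ℂ[X]}
    (hg : g.natDegree ≤ m) : LL ω (g * f) = 0 := by
  conv_lhs => rw [g.as_sum_range' (m + 1) (Nat.lt_succ_of_le hg), Finset.sum_mul]
  rw [LL_sum]
  apply Finset.sum_eq_zero
  intro j hj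
  rw [Finset.mem_range] at hj
  have : (monomial j) (g.coeff j) * f = C (g.coeff j) * (X ^ j * f) := by
    rw [← C_mul_X_pow_eq_monomial]; ring
  rw [this, LL_C_mul, h j (Nat.lt_succ_iff.mp hj), mul_zero]

/-- Boundary lemma: an over-orthogonal polynomial vanishes at `±1`. -/
lemma boundary_zero {f : ℂ[X]} {m : ℕ} (h : Orth ω f m) (hd : f.natDegree < m) :
    Polynomial.eval 1 f = 0 ∧ Polynomial.eval (-1) f = 0 := by
  have hm1 : 1 ≤ m := Nat.pos_of_ne_zero (by omega)
  have hf'le : (derivative f).natDegree ≤ m - 1 :=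
    le_trans (natDegree_derivative_le f) (by omega)
  -- L(f*f) = 0
  have hff : LL ω (f * f) = 0 := LL_mul_eq_zero ω h (le_of_lt hd)
  -- L(X*f*f) = 0
  have hXff : LL ω ((X * f) * f) = 0 := by
    apply LL_mul_eq_zero ω h
    calc (X * f).natDegree ≤ 1 + f.natDegree := natDegree_mul_le.trans (by simp)
    _ ≤ m := by omega
  -- L(derivative (f*f)) = 0
  have hD1 : LL ω (derivative (f * f)) = 0 := by
    have e : derivative (f * f) = (2 * derivative f) * f := by
      rw [derivative_mul]; ring
    rw [e]
    apply LL_mul_eq_zero ω h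
    calc (2 * derivative f).natDegree ≤ 0 + (derivative f).natDegree :=
      natDegree_mul_le.trans (by simp [natDegree_ofNat])
    _ ≤ m := by omega
  -- L(derivative (X*f*f)) = 0
  have hD2 : LL ω (derivative (X * (f * f))) = 0 := by
    have e : derivative (X * (f * f)) = f * f + (2 * (X * derivative f)) * f := by
      rw [derivative_mul, derivative_mul, derivative_X]; ring
    rw [e, LL_add, hff]
    rw [LL_mul_eq_zero ω h, add_zero]
    calc (2 * (X * derivative f)).natDegree ≤ 0 + (1 + (derivative f).natDegree) := by
          apply natDegree_mul_le.trans
          gcongr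
          · simp [natDegree_ofNat]
          · exact natDegree_mul_le.trans (by simp)
    _ ≤ m := by omega
  -- string equation for f*f and X*(f*f)
  have s1 := LL_derivative ω (f * f)
  have s2 := LL_derivative ω (X * (f * f))
  rw [hD1, hff, mul_zero, sub_zero] at s1
  have hLXff : LL ω (X * (f * f)) = 0 := by
    have : X * (f * f) = (X * f) * f := by ring
    rw [this]; exact hXff
  rw [hD2, hLXff, mul_zero, sub_zero] at s2
  simp only [eval_mul, eval_X, eval_one, one_mul] at s1 s2
  -- s1 : 0 = f(1)^2 e^{iω} - f(-1)^2 e^{-iω}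
  -- s2 : 0 = f(1)^2 e^{iω} + f(-1)^2 e^{-iω}
  have hne : Complex.exp (-(Complex.I * ω)) ≠ 0 := Complex.exp_ne_zero _
  have hne' : Complex.exp (Complex.I * ω) ≠ 0 := Complex.exp_ne_zero _
  have hm1' : Polynomial.eval (-1) f = 0 := by
    have h2 : (Polynomial.eval (-1) f * Polynomial.eval (-1) f)
        * Complex.exp (-(Complex.I * ω)) = 0 := by linear_combination (s1 - s2) / 2
    rcases mul_eq_zero.mp h2 with h | h
    · exact mul_self_eq_zero.mp h
    · exact absurd h hne
  have hp1 : Polynomial.eval 1 f = 0 := by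
    have h2 : (Polynomial.eval 1 f * Polynomial.eval 1 f)
        * Complex.exp (Complex.I * ω) = 0 := by linear_combination (-s1 - s2) / 2
    rcases mul_eq_zero.mp h2 with h | h
    · exact mul_self_eq_zero.mp h
    · exact absurd h hne'
  exact ⟨hp1, hm1'⟩

/-- If `f ⊥ P_m` and `f(±1) = 0` then `f' ⊥ P_m`. -/
lemma orth_derivative {f : ℂ[X]} {m : ℕ} (h : Orth ω f m)
    (h1 : Polynomial.eval 1 f = 0) (h2 : Polynomial.eval (-1) f = 0) :
    Orth ω (derivative f) m := by
  intro j hj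
  have hD : derivative (X ^ j * f) = C (j : ℂ) * (X ^ (j - 1) * f) + X ^ j * derivative f := by
    rw [derivative_mul, derivative_X_pow]; ring
  have hs := LL_derivative ω (X ^ j * f)
  rw [h j hj, mul_zero, sub_zero] at hs
  simp only [eval_mul, eval_pow, eval_X, h1, h2, mul_zero, zero_mul, sub_zero, one_pow,
    one_mul] at hs
  -- hs : LL ω (derivative (X^j * f)) = 0
  have hlow : LL ω (C (j : ℂ) * (X ^ (j - 1) * f)) = 0 := by
    rw [LL_C_mul]
    rcases Nat.eq_zero_or_pos j with h0 | hpos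
    · simp [h0]
    · rw [h (j - 1) (by omega), mul_zero]
  have := hD ▸ hs
  rw [LL_add, hlow, zero_add] at this
  exact this

/-- Key lemma: there is no nonzero polynomial orthogonal to strictly more powers
than its degree. -/
lemma exc_deg0 {f : ℂ[X]} {m : ℕ} (h0 : f.natDegree = 0) (hlt : f.natDegree < m)
    (h : Orth ω f m) : f = 0 := by
  have hb := (boundary_zero ω h hlt).1
  have hC : f = C (f.coeff 0) := eq_C_of_natDegree_eq_zero h0
  rw [hC, eval_C] at hb
  rw [hC, hb, map_zero]

lemma exc_aux : ∀ d : ℕ, ∀ (f : ℂ[X]) (m : ℕ), f.natDegree ≤ d → f.natDegree < m →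
    Orth ω f m → f = 0 := by
  intro d
  induction d with
  | zero =>
    intro f m hd hlt h
    exact exc_deg0 ω (Nat.le_zero.mp hd) hlt h
  | succ d ih =>
    intro f m hd hlt h
    by_cases h0 : f.natDegree = 0
    · exact exc_deg0 ω h0 hlt h
    · have hb := boundary_zero ω h hlt
      have h' := orth_derivative ω h hb.1 hb.2
      have hder : derivative f = 0 := by
        apply ih (derivative f) m
        · have := natDegree_derivative_lt (p := f) h0
          omega
        · have := natDegree_derivative_lt (p := f) h0
          omega
        · exact h'
      exact absurd (natDegree_eq_zero_of_derivative_eq_zero hder) h0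

lemma exc {f : ℂ[X]} {m : ℕ} (hlt : f.natDegree < m) (h : Orth ω f m) : f = 0 :=
  exc_aux ω f.natDegree f m le_rfl hlt h

/-- Main induction: no "pair" of kernel polynomials at consecutive levels. -/
lemma noPair : ∀ m : ℕ, ∀ p q : ℂ[X], p ≠ 0 → q ≠ 0 → p.natDegree ≤ m → Orth ω p m →
    q.natDegree ≤ m + 1 → Orth ω q (m + 1) → False := by
  intro m
  induction m using Nat.strong_induction_on with
  | _ m ih =>
  intro p q hp hq hdp hop hdq hoq
  by_cases hdq' : q.natDegree < m + 1
  · exact hq (exc ω hdq' hoq)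
  have hdq2 : q.natDegree = m + 1 := le_antisymm hdq (not_lt.mp hdq')
  by_cases hdp' : p.natDegree < m
  · exact hp (exc ω hdp' hop)
  have hdp2 : p.natDegree = m := le_antisymm hdp (not_lt.mp hdp')
  have hpm : p.coeff m ≠ 0 := by
    rw [← hdp2, coeff_natDegree]; exact leadingCoeff_ne_zero.mpr hp
  have hqm : q.coeff (m + 1) ≠ 0 := by
    rw [← hdq2, coeff_natDegree]; exact leadingCoeff_ne_zero.mpr hq
  set a : ℂ := q.coeff (m + 1) / p.coeff m with ha_def
  have ha : a ≠ 0 := div_ne_zero hqm hpm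
  set r : ℂ[X] := q - C a * X * p with hr_def
  set b : ℂ := r.coeff m / p.coeff m with hb_def
  set q' : ℂ[X] := r - C b * p with hq'_def
  -- coefficients of q' vanish from degree m on
  have hcoeff : ∀ j : ℕ, m ≤ j → q'.coeff j = 0 := by
    intro j hj
    have hCaXp : ∀ i : ℕ, (C a * X * p).coeff (i + 1) = a * p.coeff i := by
      intro i
      rw [mul_assoc, coeff_C_mul, coeff_X_mul]
    rcases Nat.lt_or_ge j (m + 1) with hcase | hcase
    · -- j = m
      have hjm : j = m := by omega
      have : q'.coeff m = r.coeff m - b * p.coeff m := by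
        simp [hq'_def, coeff_C_mul]
      rw [hjm, this, hb_def, div_mul_cancel₀ _ hpm, sub_self]
    · rcases Nat.lt_or_ge j (m + 2) with hcase2 | hcase2
      · -- j = m + 1
        have hj1 : j = m + 1 := by omega
        have h1 : r.coeff (m + 1) = 0 := by
          simp only [hr_def, coeff_sub]
          rw [hCaXp m, ha_def, div_mul_cancel₀ _ hpm, sub_self]
        have h2 : (C b * p).coeff (m + 1) = 0 := by
          rw [coeff_C_mul, coeff_eq_zero_of_natDegree_lt (by omega), mul_zero]
        rw [hj1]
        simp only [hq'_def, coeff_sub, h1, h2, sub_zero]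
      · -- j ≥ m + 2
        have hq0 : q.coeff j = 0 := coeff_eq_zero_of_natDegree_lt (by omega)
        have hp0 : p.coeff j = 0 := coeff_eq_zero_of_natDegree_lt (by omega)
        have hp0' : p.coeff (j - 1) = 0 := coeff_eq_zero_of_natDegree_lt (by omega)
        have h1 : (C a * X * p).coeff j = 0 := by
          obtain ⟨i, rfl⟩ : ∃ i, j = i + 1 := ⟨j - 1, by omega⟩
          rw [hCaXp i]
          simp only [Nat.add_sub_cancel] at hp0'
          rw [hp0', mul_zero]
        simp only [hq'_def, hr_def, coeff_sub, coeff_C_mul, hq0, h1, hp0, mul_zero,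
          sub_zero, zero_sub, neg_eq_zero, sub_self]
  -- orthogonality of q' one level down
  have hoq' : ∀ j : ℕ, j + 1 ≤ m → LL ω (X ^ j * q') = 0 := by
    intro j hj
    have e1 : X ^ j * q' = X ^ j * q - C a * (X ^ (j + 1) * p) - C b * (X ^ j * p) := by
      simp only [hq'_def, hr_def]; ring
    rw [e1, LL_sub, LL_sub, LL_C_mul, LL_C_mul, hoq j (by omega), hop (j + 1) (by omega),
      hop j (by omega)]
    ring
  by_cases hq'0 : q' = 0
  · -- q = (a X + b) p : then p is orthogonal up to m+2, contradiction with exc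
    have hfac : q = (C a * X + C b) * p := by
      have : q - (C a * X + C b) * p = q' := by simp only [hq'_def, hr_def]; ring
      rw [hq'0] at this
      linear_combination this
    have hstep : ∀ s : ℕ, m ≤ s → LL ω (X ^ s * p) = 0 → LL ω (X ^ s * q) = 0 →
        LL ω (X ^ (s + 1) * p) = 0 := by
      intro s _ hps hqs
      have e : X ^ s * q = C a * (X ^ (s + 1) * p) + C b * (X ^ s * p) := by
        rw [hfac]; ring
      rw [e, LL_add, LL_C_mul, LL_C_mul, hps, mul_zero, add_zero] at hqs
      exact (mul_eq_zero.mp hqs).resolve_left ha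
    have hm1 : LL ω (X ^ (m + 1) * p) = 0 :=
      hstep m le_rfl (hop m le_rfl) (hoq m (by omega))
    have hm2 : LL ω (X ^ (m + 2) * p) = 0 :=
      hstep (m + 1) (by omega) hm1 (hoq (m + 1) (by omega))
    have hop2 : Orth ω p (m + 2) := by
      intro j hj
      rcases Nat.lt_or_ge j (m + 1) with h' | h'
      · exact hop j (by omega)
      · rcases Nat.lt_or_ge j (m + 2) with h'' | h''
        · have : j = m + 1 := by omega
          rw [this]; exact hm1
        · have : j = m + 2 := by omega
          rw [this]; exact hm2
    exact hp (exc ω (show p.natDegree < m + 2 by omega) hop2)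
  · -- q' ≠ 0 : descend to level m - 1
    have hdeg : q'.degree < (m : WithBot ℕ) := by
      rw [Polynomial.degree_lt_iff_coeff_zero]
      intro j hj
      exact hcoeff j (by exact_mod_cast hj)
    rcases Nat.eq_zero_or_pos m with hm0 | hmpos
    · subst hm0
      exact hq'0 (Polynomial.ext fun j => by simpa using hcoeff j (Nat.zero_le j))
    · obtain ⟨m', rfl⟩ : ∃ m', m = m' + 1 := ⟨m - 1, by omega⟩
      have hdq'nat : q'.natDegree ≤ m' := by
        have := (natDegree_lt_iff_degree_lt hq'0).mpr (by exact_mod_cast hdeg)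
        omega
      apply ih m' (by omega) q' p hq'0 hp hdq'nat
      · intro j hj
        exact hoq' j (by omega)
      · exact le_of_eq hdp2
      · intro j hj
        exact hop j hj

end Stmt17Aux

/-- Two consecutive Hankel determinants have no common positive real zero. -/
theorem stmt17 :
    ¬ ∃ (n : ℕ) (ω : ℝ), 1 ≤ n ∧ 0 < ω ∧ hankel (n - 1) ω = 0 ∧ hankel n ω = 0 := by
  rintro ⟨n, ω, hn, hω, h1, h2⟩
  obtain ⟨m, rfl⟩ : ∃ m, n = m + 1 := ⟨n - 1, by omega⟩
  simp only [Nat.add_sub_cancel] at h1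
  -- kernel vectors
  obtain ⟨v, hv, hvz⟩ := Matrix.exists_mulVec_eq_zero_iff.mpr h1
  obtain ⟨w, hw, hwz⟩ := Matrix.exists_mulVec_eq_zero_iff.mpr h2
  open Polynomial Stmt17Aux in
  -- build the kernel polynomials
  have main : ∀ (N : ℕ) (u : Fin (N + 1) → ℂ), u ≠ 0 →
      (Matrix.of fun j k : Fin (N + 1) => mu ω ((j : ℕ) + (k : ℕ))).mulVec u = 0 →
      ∃ P : ℂ[X], P ≠ 0 ∧ P.natDegree ≤ N ∧ Stmt17Aux.Orth ω P N := by
    intro N u hu huz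
    refine ⟨∑ k : Fin (N + 1), Polynomial.C (u k) * Polynomial.X ^ (k : ℕ), ?_, ?_, ?_⟩
    · obtain ⟨k0, hk0⟩ := Function.ne_iff.mp hu
      intro hzero
      apply hk0
      have hco : (∑ k : Fin (N + 1), Polynomial.C (u k) * Polynomial.X ^ (k : ℕ)).coeff
          (k0 : ℕ) = u k0 := by
        rw [Polynomial.finset_sum_coeff]
        rw [Finset.sum_eq_single k0]
        · simp [Polynomial.coeff_C_mul, Polynomial.coeff_X_pow]
        · intro k _ hkne
          simp only [Polynomial.coeff_C_mul, Polynomial.coeff_X_pow]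
          rw [if_neg (by
            intro hcontra
            exact hkne (Fin.ext hcontra.symm ▸ rfl))]
          ring
        · intro hk; exact absurd (Finset.mem_univ k0) hk
      rw [hzero] at hco
      simp at hco
      exact hco.symm
    · rw [Polynomial.natDegree_le_iff_coeff_eq_zero]
      intro j hj
      rw [Polynomial.finset_sum_coeff]
      apply Finset.sum_eq_zero
      intro k _
      simp only [Polynomial.coeff_C_mul, Polynomial.coeff_X_pow]
      rw [if_neg (by omega)]
      ring
    · intro j hj
      have e : Polynomial.X ^ j * ∑ k : Fin (N + 1), Polynomial.C (u k) *
          Polynomial.X ^ (k : ℕ)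
          = ∑ k : Fin (N + 1), Polynomial.C (u k) * Polynomial.X ^ (j + (k : ℕ)) := by
        rw [Finset.mul_sum]
        congr 1; funext k
        rw [pow_add]; ring
      rw [e, Stmt17Aux.LL_sum]
      have hrow := congrFun huz ⟨j, by omega⟩
      simp only [Matrix.mulVec, dotProduct, Matrix.of_apply, Pi.zero_apply] at hrow
      rw [← hrow]
      congr 1; funext k
      rw [Stmt17Aux.LL_C_mul, Stmt17Aux.LL_X_pow]
      ring
  obtain ⟨p, hp, hdp, hop⟩ := main m v hv hvz
  obtain ⟨q, hq, hdq, hoq⟩ := main (m + 1) w hw hwz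
  exact Stmt17Aux.noPair ω m p q hp hq hdp hop hdq hoq
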